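/- Let P be redundantly distributed into local datasets P_i, i ∈ R, with nonnegative recovery coefficients b_i satisfying 1 ≤ Σ_{i∈R: p∈P_i} b_i ≤ 1+δ for every p ∈ P. Suppose for each i ∈ R, (S_i, w_i) is an ε-coreset for P_i (with respect to a nonnegative pointwise cost). Then S = ∪_{i∈R} S_i with weights w(c) = b_i · w_i(c) for c ∈ S_i is a 2(ε+δ)-coreset for P; concretely, for every center set C, (1 − 2ε − 2δ)·cost(P, C) ≤ cost(S, C, w) ≤ (1 + 2ε + 2δ)·cost(P, C). -/

import Mathlib

open Finset

/-- Lemma 4: combining local `ε`-coresets using a straggler-resilient redundant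
assignment (recovery weights summing in `[1, 1+δ]` on each point) yields a
`2(ε+δ)`-coreset for the full dataset: for every candidate `C`,
`(1-2ε-2δ) cost(P,C) ≤ cost(S,C,w) ≤ (1+2ε+2δ) cost(P,C)`. -/
theorem combined_coreset {α 𝒞 : Type*} [DecidableEq α] {ι : Type*} [DecidableEq ι]
    -- nonnegative pointwise cost
    (f : α → 𝒞 → ℝ) (hf : ∀ q C, 0 ≤ f q C)
    (P : Finset α) (R : Finset ι) (Pl : ι → Finset α)
    (hPl : ∀ i ∈ R, Pl i ⊆ P)
    (b : ι → ℝ) (hb : ∀ i ∈ R, 0 ≤ b i)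
    (ε δ : ℝ) (hε : 0 ≤ ε) (hδ : 0 ≤ δ) (hεδ : ε * δ ≤ ε + δ)
    -- straggler-resilience of the assignment
    (hcov : ∀ p ∈ P,
      1 ≤ ∑ i ∈ R.filter (fun i => p ∈ Pl i), b i ∧
      ∑ i ∈ R.filter (fun i => p ∈ Pl i), b i ≤ 1 + δ)
    -- local coresets: (S i, w i) is an ε-coreset for Pl i
    (S : ι → Finset α) (w : ι → α → ℝ) (hw : ∀ i ∈ R, ∀ c ∈ S i, 0 ≤ w i c)
    (hcore : ∀ i ∈ R, ∀ C : 𝒞,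
      (1 - ε) * ∑ q ∈ Pl i, f q C ≤ ∑ c ∈ S i, w i c * f c C ∧
      ∑ c ∈ S i, w i c * f c C ≤ (1 + ε) * ∑ q ∈ Pl i, f q C) :
    ∀ C : 𝒞,
      (1 - 2 * ε - 2 * δ) * ∑ q ∈ P, f q C ≤
          ∑ i ∈ R, b i * ∑ c ∈ S i, w i c * f c C ∧
      ∑ i ∈ R, b i * ∑ c ∈ S i, w i c * f c C ≤
          (1 + 2 * ε + 2 * δ) * ∑ q ∈ P, f q C := by
  intro C
  set K := ∑ q ∈ P, f q C with hK
  have hK0 : 0 ≤ K := Finset.sum_nonneg fun q _ => hf q C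
  -- swap: ∑ i b i * cost(Pl i) = ∑ q (∑_{i: q∈Pl i} b i) * f q C
  have hswap : ∑ i ∈ R, b i * ∑ q ∈ Pl i, f q C
      = ∑ q ∈ P, (∑ i ∈ R.filter (fun i => q ∈ Pl i), b i) * f q C := by
    have : ∀ i ∈ R, b i * ∑ q ∈ Pl i, f q C
        = ∑ q ∈ P, (if q ∈ Pl i then b i * f q C else 0) := by
      intro i hi
      rw [Finset.mul_sum, ← Finset.sum_filter]
      congr 1
      rw [Finset.filter_mem_eq_inter, Finset.inter_comm,
        Finset.inter_eq_left.mpr (hPl i hi)]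
    rw [Finset.sum_congr rfl this, Finset.sum_comm]
    refine Finset.sum_congr rfl fun q hq => ?_
    rw [← Finset.sum_filter, Finset.sum_mul]
  have hmidlo : K ≤ ∑ i ∈ R, b i * ∑ q ∈ Pl i, f q C := by
    rw [hswap, hK]
    refine Finset.sum_le_sum fun q hq => ?_
    nth_rewrite 1 [← one_mul (f q C)]
    exact mul_le_mul_of_nonneg_right (hcov q hq).1 (hf q C)
  have hmidhi : ∑ i ∈ R, b i * ∑ q ∈ Pl i, f q C ≤ (1 + δ) * K := by
    rw [hswap, hK, Finset.mul_sum]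
    refine Finset.sum_le_sum fun q hq => ?_
    exact mul_le_mul_of_nonneg_right (hcov q hq).2 (hf q C)
  have hSnn : 0 ≤ ∑ i ∈ R, b i * ∑ c ∈ S i, w i c * f c C :=
    Finset.sum_nonneg fun i hi => mul_nonneg (hb i hi)
      (Finset.sum_nonneg fun c hc => mul_nonneg (hw i hi c hc) (hf c C))
  constructor
  · -- lower bound
    by_cases h1 : 1 - ε ≤ 0
    · calc (1 - 2*ε - 2*δ) * K ≤ 0 := mul_nonpos_of_nonpos_of_nonneg (by linarith) hK0
        _ ≤ _ := hSnn
    · push_neg at h1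
      have step1 : (1 - ε) * ∑ i ∈ R, b i * ∑ q ∈ Pl i, f q C
          ≤ ∑ i ∈ R, b i * ∑ c ∈ S i, w i c * f c C := by
        rw [Finset.mul_sum]
        refine Finset.sum_le_sum fun i hi => ?_
        rw [mul_left_comm]
        exact mul_le_mul_of_nonneg_left (hcore i hi C).1 (hb i hi)
      calc (1 - 2*ε - 2*δ) * K ≤ (1 - ε) * K := by nlinarith
        _ ≤ (1 - ε) * ∑ i ∈ R, b i * ∑ q ∈ Pl i, f q C :=
          mul_le_mul_of_nonneg_left hmidlo (le_of_lt h1)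
        _ ≤ _ := step1
  · -- upper bound
    have step1 : ∑ i ∈ R, b i * ∑ c ∈ S i, w i c * f c C
        ≤ (1 + ε) * ∑ i ∈ R, b i * ∑ q ∈ Pl i, f q C := by
      rw [Finset.mul_sum]
      refine Finset.sum_le_sum fun i hi => ?_
      rw [mul_left_comm]
      exact mul_le_mul_of_nonneg_left (hcore i hi C).2 (hb i hi)
    calc ∑ i ∈ R, b i * ∑ c ∈ S i, w i c * f c C
        ≤ (1 + ε) * ∑ i ∈ R, b i * ∑ q ∈ Pl i, f q C := step1
      _ ≤ (1 + ε) * ((1 + δ) * K) :=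
        mul_le_mul_of_nonneg_left hmidhi (by linarith)
      _ ≤ (1 + 2*ε + 2*δ) * K := by nlinarith
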